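/- arXiv:0710.3864 — 2 statements merged into one kernel-verified Lean document; each statement's English description precedes it below -/
import Mathlib

section
/- Let R = ℂ[x₁, …, xₙ] with n ≥ 2. Let L be the Lie algebra of derivations of R generated by all derivations of the form f·∂ᵢ and xᵢ·f·∂ᵢ, where 1 ≤ i ≤ n and f ∈ R satisfies ∂ᵢ(f) = 0. Then L contains every derivation of the form g·∂ⱼ for arbitrary g ∈ R and 1 ≤ j ≤ n; consequently L equals the Lie algebra of all ℂ-derivations of R. -/
open MvPolynomial

/-- The partial derivative `∂/∂xᵢ` as a `ℂ`-derivation of `ℂ[x₁,…,xₙ]`. -/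
noncomputable def pd {n : ℕ} (i : Fin n) :
    Derivation ℂ (MvPolynomial (Fin n) ℂ) (MvPolynomial (Fin n) ℂ) :=
  pderiv i

lemma pd_X_self {n : ℕ} (i : Fin n) : pd i (X i) = 1 := pderiv_X_self i
lemma pd_X_ne {n : ℕ} {i j : Fin n} (h : j ≠ i) : pd i (X j) = 0 := pderiv_X_of_ne h

lemma pderiv_comm' {n : ℕ} (i j : Fin n) (p : MvPolynomial (Fin n) ℂ) :
    pderiv i (pderiv j p) = pderiv j (pderiv i p) := by
  induction p using MvPolynomial.induction_on with
  | C a => simp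
  | add p q hp hq => simp [hp, hq]
  | mul_X p k hp =>
    have h1 : ∀ a b : Fin n, pderiv a (pderiv b (X k : MvPolynomial (Fin n) ℂ)) = 0 := by
      intro a b
      by_cases hbk : b = k
      · subst hbk; simp
      · rw [pderiv_X_of_ne (Ne.symm hbk)]; simp
    simp only [pderiv_mul, map_add, pderiv_mul, hp, h1]; ring

-- bracket identity A
lemma brA {n : ℕ} {i j : Fin n} (hij : i ≠ j) (a : MvPolynomial (Fin n) ℂ) :
    a • pd j = ⁅a • pd i, (X i : MvPolynomial (Fin n) ℂ) • pd j⁆ + ((X i : MvPolynomial (Fin n) ℂ) * pd j a) • pd i := by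
  apply MvPolynomial.derivation_ext
  intro k
  simp only [Derivation.add_apply, Derivation.commutator_apply, Derivation.smul_apply,
    smul_eq_mul]
  by_cases hk : k = j
  · subst hk
    rw [pd_X_self, pd_X_ne (Ne.symm hij)]
    simp [pd, pderiv_mul, pd_X_ne hij, pderiv_X_of_ne hij]
  · rw [pd_X_ne (fun h => hk h : (k : Fin n) ≠ j)]
    by_cases hk2 : k = i
    · subst hk2
      rw [pd_X_self]
      simp [pd, pderiv_mul, pderiv_X_of_ne (fun h => hk h : (k : Fin n) ≠ j)]
    · rw [pd_X_ne (fun h => hk2 h : (k : Fin n) ≠ i)]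
      simp

-- bracket identity B
lemma brB {n : ℕ} {j : Fin n} (a b : MvPolynomial (Fin n) ℂ) (hb : pd j b = 0) :
    (b * pd j a) • pd j = -⁅a • pd j, b • pd j⁆ := by
  apply MvPolynomial.derivation_ext
  intro k
  simp only [Derivation.neg_apply, Derivation.commutator_apply, Derivation.smul_apply,
    smul_eq_mul]
  by_cases hk : k = j
  · subst hk
    rw [pd_X_self]
    show b * pd k a * 1 = -(a * pderiv k (b * 1) - b * pderiv k (a * 1))
    have : pderiv k b = 0 := hb
    simp [this, pd]
  · rw [pd_X_ne (fun h => hk h : (k : Fin n) ≠ j)]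
    show b * pd j a * 0 = -(a * pderiv j (b * 0) - b * pderiv j (a * 0))
    simp

variable {n : ℕ}

noncomputable abbrev Sgen (n : ℕ) : Set (Derivation ℂ (MvPolynomial (Fin n) ℂ) (MvPolynomial (Fin n) ℂ)) :=
  {D | ∃ (i : Fin n) (f : MvPolynomial (Fin n) ℂ), pd i f = 0 ∧
    (D = f • pd i ∨ D = (X i * f) • pd i)}

lemma mem1 {i j : Fin n} (hij : i ≠ j) (a : MvPolynomial (Fin n) ℂ) (ha : pd i a = 0) :
    a • pd j ∈ LieSubalgebra.lieSpan ℂ _ (Sgen n) := by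
  rw [brA hij a]
  refine add_mem (LieSubalgebra.lie_mem _ ?_ ?_) ?_
  · exact LieSubalgebra.subset_lieSpan ⟨i, a, ha, Or.inl rfl⟩
  · exact LieSubalgebra.subset_lieSpan ⟨j, X i, pd_X_ne hij, Or.inl rfl⟩
  · refine LieSubalgebra.subset_lieSpan ⟨i, pd j a, ?_, Or.inr rfl⟩
    show pderiv i (pderiv j a) = 0
    rw [pderiv_comm', show pderiv i a = 0 from ha, map_zero]

lemma mem2 {i j : Fin n} (hij : i ≠ j) (a b : MvPolynomial (Fin n) ℂ)
    (ha : pd i a = 0) (hb : pd j b = 0) :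
    (b * pd j a) • pd j ∈ LieSubalgebra.lieSpan ℂ _ (Sgen n) := by
  rw [brB a b hb]
  refine neg_mem (LieSubalgebra.lie_mem _ (mem1 hij a ha) ?_)
  exact LieSubalgebra.subset_lieSpan ⟨j, b, hb, Or.inl rfl⟩

lemma mem_monomial {i j : Fin n} (hij : i ≠ j) (s : Fin n →₀ ℕ) (c : ℂ) :
    (monomial s c : MvPolynomial (Fin n) ℂ) • pd j ∈
      LieSubalgebra.lieSpan ℂ _ (Sgen n) := by
  set k := s j with hk
  set b : MvPolynomial (Fin n) ℂ := monomial (s.erase j) c with hbdef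
  have hb : pd j b = 0 := by
    show pderiv j b = 0
    rw [hbdef, pderiv_monomial]
    simp [Finsupp.erase_same]
  have ha : pd i ((X j : MvPolynomial (Fin n) ℂ) ^ (k + 1)) = 0 := by
    show pderiv i _ = 0
    rw [pderiv_pow, pderiv_X_of_ne (Ne.symm hij), mul_zero]
  have hda : pd j ((X j : MvPolynomial (Fin n) ℂ) ^ (k + 1)) =
      ((k + 1 : ℕ) : MvPolynomial (Fin n) ℂ) * X j ^ k := by
    show pderiv j _ = _
    rw [pderiv_pow, pderiv_X_self, mul_one]
    simp
  have key : monomial s c = ((k + 1 : ℂ))⁻¹ •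
      (b * pd j ((X j : MvPolynomial (Fin n) ℂ) ^ (k + 1))) := by
    rw [hda, smul_eq_C_mul]
    have hb2 : b * (((k + 1 : ℕ) : MvPolynomial (Fin n) ℂ) * X j ^ k)
        = ((k + 1 : ℕ) : MvPolynomial (Fin n) ℂ) * (b * X j ^ k) := by ring
    rw [hb2, hbdef, X_pow_eq_monomial, monomial_mul, Finsupp.erase_add_single, mul_one]
    rw [show ((k + 1 : ℕ) : MvPolynomial (Fin n) ℂ) = C ((k + 1 : ℕ) : ℂ) by
      simp [map_natCast], ← mul_assoc, ← C_mul]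
    push_cast
    rw [inv_mul_cancel₀ (Nat.cast_add_one_ne_zero k), C_1, one_mul]
  rw [key, smul_assoc]
  exact LieSubalgebra.smul_mem _ _ (mem2 hij _ b ha hb)

lemma der_sum_apply {ι : Type*} (t : Finset ι)
    (f : ι → Derivation ℂ (MvPolynomial (Fin n) ℂ) (MvPolynomial (Fin n) ℂ))
    (a : MvPolynomial (Fin n) ℂ) : (∑ i ∈ t, f i) a = ∑ i ∈ t, f i a := by
  classical
  induction t using Finset.induction_on with
  | empty => simp
  | @insert a s h ih => rw [Finset.sum_insert h, Finset.sum_insert h, Derivation.add_apply, ih]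

lemma part1 (hn : 2 ≤ n) (g : MvPolynomial (Fin n) ℂ) (j : Fin n) :
    g • pd j ∈ LieSubalgebra.lieSpan ℂ _ (Sgen n) := by
  have h0 : (0 : ℕ) < n := by omega
  have h1 : (1 : ℕ) < n := by omega
  set i : Fin n := if j = ⟨0, h0⟩ then ⟨1, h1⟩ else ⟨0, h0⟩ with hi
  have hij : i ≠ j := by
    rcases eq_or_ne j ⟨0, h0⟩ with h | h
    · rw [hi, if_pos h, h]
      exact Fin.ne_of_val_ne (by simp)
    · rw [hi, if_neg h]
      exact Ne.symm h
  have hg : g • pd j = ∑ v ∈ g.support, (monomial v (coeff v g) : MvPolynomial (Fin n) ℂ) • pd j := by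
    rw [← Finset.sum_smul, ← MvPolynomial.as_sum]
  rw [hg]
  exact sum_mem fun v _ => mem_monomial hij v _

theorem stmt12 (n : ℕ) (hn : 2 ≤ n) :
    (∀ (g : MvPolynomial (Fin n) ℂ) (j : Fin n),
      g • pd j ∈ LieSubalgebra.lieSpan ℂ
        (Derivation ℂ (MvPolynomial (Fin n) ℂ) (MvPolynomial (Fin n) ℂ))
        {D | ∃ (i : Fin n) (f : MvPolynomial (Fin n) ℂ), pd i f = 0 ∧
          (D = f • pd i ∨ D = (X i * f) • pd i)}) ∧
    LieSubalgebra.lieSpan ℂ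
        (Derivation ℂ (MvPolynomial (Fin n) ℂ) (MvPolynomial (Fin n) ℂ))
        {D | ∃ (i : Fin n) (f : MvPolynomial (Fin n) ℂ), pd i f = 0 ∧
          (D = f • pd i ∨ D = (X i * f) • pd i)} = ⊤ := by
  refine ⟨part1 hn, ?_⟩
  rw [eq_top_iff]
  intro D _
  have hD : D = ∑ j : Fin n, (D (X j)) • pd j := by
    apply MvPolynomial.derivation_ext
    intro k
    rw [der_sum_apply]
    rw [Finset.sum_eq_single k]
    · simp [pd]
    · intro b _ hb
      rw [Derivation.smul_apply, pd_X_ne (Ne.symm hb), smul_zero]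
    · intro h; exact absurd (Finset.mem_univ k) h
  rw [hD]
  exact sum_mem fun j _ => part1 hn _ j
end

section
/- Let B be a commutative domain, A ⊆ B a subring that is a domain integrally closed in its fraction field K, and let G be a group acting on B by ring automorphisms that map A onto A. Let b ∈ B be fixed by every element of G and integral over A. Then the coefficients of the minimal polynomial of b over K lie in the subring A^G of G-invariant elements of A. -/
set_option synthInstance.maxHeartbeats 100000
set_option maxHeartbeats 800000


theorem stmt13 {B : Type*} [CommRing B] [IsDomain B]
    (A : Subring B) [IsIntegrallyClosed A]
    (G : Type*) [Group G] [MulSemiringAction G B]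
    (hGA : ∀ g : G, (fun x => g • x) '' (A : Set B) = (A : Set B))
    (b : B) (hb : ∀ g : G, g • b = b) (hint : IsIntegral A b) :
    ∀ (i : ℕ) (g : G), g • (((minpoly A b).coeff i : A) : B)
      = (((minpoly A b).coeff i : A) : B) := by
  intro i g
  have hmem : ∀ a : A, g • (a : B) ∈ A := fun a => by
    rw [← SetLike.mem_coe, ← hGA g]; exact ⟨a, a.2, rfl⟩
  haveI : Module.IsTorsionFree A B :=
    NoZeroSMulDivisors.iff_algebraMap_injective.mpr Subtype.val_injective
  -- the ring hom A →+* A induced by g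
  let e : A →+* A :=
    { toFun := fun a => ⟨g • (a : B), hmem a⟩
      map_one' := by ext; simp
      map_mul' := fun x y => by ext; simp [smul_mul']
      map_zero' := by ext; simp
      map_add' := fun x y => by ext; simp }
  let σ : B →+* B := MulSemiringAction.toRingHom G B g
  have hcomm : σ.comp (algebraMap A B) = (algebraMap A B).comp e := rfl
  have key : (minpoly A b).map e = minpoly A b := by
    apply IsIntegrallyClosed.minpoly.unique
    · exact (minpoly.monic hint).map e
    · have : (Polynomial.aeval b) ((minpoly A b).map e)
          = σ ((Polynomial.aeval b) (minpoly A b)) := by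
        rw [Polynomial.aeval_def, Polynomial.aeval_def, Polynomial.eval₂_eq_eval_map,
          Polynomial.eval₂_eq_eval_map, Polynomial.map_map, ← hcomm,
          ← Polynomial.map_map, Polynomial.eval_map]
        have h2 := Polynomial.eval₂_hom (f := σ) (p := (minpoly A b).map (algebraMap A B)) b
        rw [show σ b = b from hb g] at h2
        exact h2
      rw [this, minpoly.aeval, map_zero]
    · intro Q hQ hQ0
      rw [(minpoly.monic hint).degree_map e]
      exact minpoly.min A b hQ hQ0
  have := congrArg (fun p => Polynomial.coeff p i) key
  simp only [Polynomial.coeff_map] at this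
  have : ((e ((minpoly A b).coeff i) : A) : B) = (((minpoly A b).coeff i : A) : B) :=
    congrArg _ this
  exact this
end
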